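/- Let S be a finite nonempty set with n = |S| elements, let q be a probability distribution on S, let u be the uniform distribution on S, and let ρ = (1/2)∑_{x∈S} |q(x) − u(x)| be their total variation distance. Then the Shannon entropy of q satisfies H(q) ≥ (1−ρ)·log n + ρ·log ρ − ρ, with the convention ρ·log ρ = 0 when ρ = 0. -/

import Mathlib

private lemma aux_pt (n q : ℝ) (hn : 1 ≤ n) (hq : 0 ≤ q) (hq1 : q ≤ 1) :
    q * Real.log q ≤ max (q - 1/n) 0 * (Real.log n + 1) - q * Real.log n := by
  have hn0 : (0:ℝ) < n := lt_of_lt_of_le one_pos hn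
  rcases eq_or_lt_of_le hq with h0 | h0
  · rw [← h0]
    have hm : max ((0:ℝ) - 1/n) 0 = 0 := max_eq_right (by
      have : 0 < 1/n := by positivity
      linarith)
    rw [hm]
    simp
  · have hlog : Real.log q = Real.log (q * n) - Real.log n := by
      rw [Real.log_mul (ne_of_gt h0) (ne_of_gt hn0)]; ring
    rw [hlog]
    have key : q * Real.log (q * n) ≤ max (q - 1/n) 0 * (Real.log n + 1) := by
      rcases le_total q (1/n) with hc | hc
      · have hqn : q * n ≤ 1 := (le_div_iff₀ hn0).mp hc
        have : Real.log (q * n) ≤ 0 := Real.log_nonpos (by positivity) hqn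
        have h1 : q * Real.log (q * n) ≤ 0 := mul_nonpos_of_nonneg_of_nonpos hq this
        have h2 : max (q - 1/n) 0 = 0 := max_eq_right (by linarith)
        rw [h2]; linarith
      · have hd : 0 ≤ q - 1/n := by linarith
        have hmax : max (q - 1/n) 0 = q - 1/n := max_eq_left hd
        have hqn1 : q * n ≤ n := by nlinarith
        have hqn0 : 0 < q * n := by positivity
        have hl1 : Real.log (q * n) ≤ Real.log n := Real.log_le_log hqn0 hqn1
        have hl2 : Real.log (q * n) ≤ q * n - 1 := Real.log_le_sub_one_of_pos hqn0
        have e : q * Real.log (q*n) = (q - 1/n) * Real.log (q*n) + (1/n) * Real.log (q*n) := by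
          ring
        rw [e, hmax]
        have b1 : (q - 1/n) * Real.log (q*n) ≤ (q - 1/n) * Real.log n :=
          mul_le_mul_of_nonneg_left hl1 hd
        have b2 : (1/n) * Real.log (q*n) ≤ (1/n) * (q*n - 1) :=
          mul_le_mul_of_nonneg_left hl2 (by positivity)
        have b3 : (1/n) * (q*n - 1) = q - 1/n := by field_simp
        nlinarith
    linarith

theorem stmt_6 {α : Type*} (S : Finset α) (hS : S.Nonempty) (q : α → ℝ)
    (hq0 : ∀ x ∈ S, 0 ≤ q x) (hq1 : ∑ x ∈ S, q x = 1)
    (ρ : ℝ) (hρ : ρ = (1 / 2) * ∑ x ∈ S, |q x - 1 / (S.card : ℝ)|) :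
    (1 - ρ) * Real.log (S.card : ℝ) + ρ * Real.log ρ - ρ ≤
      -∑ x ∈ S, q x * Real.log (q x) := by
  have hcard : 0 < S.card := Finset.card_pos.mpr hS
  set n : ℝ := (S.card : ℝ) with hn
  have hn1 : (1:ℝ) ≤ n := Nat.one_le_cast.mpr hcard
  have hn0 : (0:ℝ) < n := by linarith
  have hqle1 : ∀ x ∈ S, q x ≤ 1 := by
    intro x hx
    calc q x ≤ ∑ y ∈ S, q y := Finset.single_le_sum hq0 hx
    _ = 1 := hq1
  -- sum of max
  have hsum0 : ∑ x ∈ S, (q x - 1/n) = 0 := by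
    rw [Finset.sum_sub_distrib, hq1, Finset.sum_const, nsmul_eq_mul]
    field_simp
    rw [← hn]; ring
  have hmaxsum : ∑ x ∈ S, max (q x - 1/n) 0 = ρ := by
    have : ∀ x, max (q x - 1/n) 0 = ((q x - 1/n) + |q x - 1/n|)/2 := by
      intro x
      rcases le_total (q x - 1/n) 0 with h | h
      · rw [max_eq_right h, abs_of_nonpos h]; ring
      · rw [max_eq_left h, abs_of_nonneg h]; ring
    simp_rw [this]
    rw [← Finset.sum_div, Finset.sum_add_distrib, hsum0, hρ]
    ring
  -- rho bounds
  have hρ0 : 0 ≤ ρ := by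
    rw [hρ]
    positivity
  have hρ1 : ρ ≤ 1 := by
    have : ∑ x ∈ S, |q x - 1/n| ≤ ∑ x ∈ S, (q x + 1/n) := by
      apply Finset.sum_le_sum
      intro x hx
      have h1 := hq0 x hx
      have h2 : (0:ℝ) < 1/n := by positivity
      rw [abs_le]
      constructor <;> linarith
    rw [hρ]
    have hs : ∑ x ∈ S, (q x + 1/n) = 2 := by
      rw [Finset.sum_add_distrib, hq1, Finset.sum_const, nsmul_eq_mul]
      field_simp
      norm_num
      rw [← hn]; ring
    linarith
  have hρlog : ρ * Real.log ρ ≤ 0 :=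
    mul_nonpos_of_nonneg_of_nonpos hρ0 (Real.log_nonpos hρ0 hρ1)
  -- main bound
  have hmain : ∑ x ∈ S, q x * Real.log (q x) ≤ ρ * (Real.log n + 1) - Real.log n := by
    calc ∑ x ∈ S, q x * Real.log (q x)
        ≤ ∑ x ∈ S, (max (q x - 1/n) 0 * (Real.log n + 1) - q x * Real.log n) := by
          apply Finset.sum_le_sum
          intro x hx
          exact aux_pt n (q x) hn1 (hq0 x hx) (hqle1 x hx)
      _ = (∑ x ∈ S, max (q x - 1/n) 0) * (Real.log n + 1)
            - (∑ x ∈ S, q x) * Real.log n := by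
          rw [Finset.sum_sub_distrib, ← Finset.sum_mul, ← Finset.sum_mul]
      _ = ρ * (Real.log n + 1) - Real.log n := by rw [hmaxsum, hq1, one_mul]
  linarith
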